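/- Let R be a standard graded Artinian Gorenstein algebra over an Artinian local ring, and let m be the graded ideal generated by all elements of positive degree. Suppose m^δ ≠ 0 and m^{δ+1} = 0. Then for all i = 0, 1, ..., δ, the annihilator 0 : m^i equals m^{δ+1-i}. -/

import Mathlib

open Pointwise

/-- Over a self-injective commutative ring, if `ann t ≤ ann s` then `t ∣ s`. -/
theorem aux_exists_eq_mul_of_ann_le {A : Type*} [CommRing A] (inj : Module.Injective A A)
    {s t : A} (h : ∀ a : A, a * t = 0 → a * s = 0) : ∃ b : A, s = b * t := by
  classical
  set f := LinearMap.toSpanSingleton A A t with hf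
  have hker : LinearMap.ker f ≤ LinearMap.ker (LinearMap.toSpanSingleton A A s) := by
    intro a ha
    simp only [LinearMap.mem_ker, LinearMap.toSpanSingleton_apply, smul_eq_mul] at ha ⊢
    exact h a ha
  let φ : (A ⧸ LinearMap.ker f) →ₗ[A] A :=
    Submodule.liftQ _ (LinearMap.toSpanSingleton A A s) hker
  let g : (LinearMap.range f : Submodule A A) →ₗ[A] A :=
    φ ∘ₗ (f.quotKerEquivRange.symm.toLinearMap)
  obtain ⟨h', hh'⟩ := inj.out (LinearMap.range f).subtype Subtype.val_injective g
  have ht : t ∈ LinearMap.range f := ⟨1, by simp [hf]⟩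
  have h1 : h' t = g ⟨t, ht⟩ := hh' ⟨t, ht⟩
  have h2 : g ⟨t, ht⟩ = s := by
    have heq : (⟨t, ht⟩ : LinearMap.range f) = ⟨f 1, LinearMap.mem_range_self f 1⟩ := by
      apply Subtype.ext; simp [hf]
    show φ (f.quotKerEquivRange.symm ⟨t, ht⟩) = s
    rw [heq, LinearMap.quotKerEquivRange_symm_apply_image]
    show (LinearMap.toSpanSingleton A A s) 1 = s
    simp
  have h3 : h' t = t * h' 1 := by
    conv_lhs => rw [show t = t • (1 : A) by simp]
    rw [map_smul, smul_eq_mul]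
  exact ⟨h' 1, by rw [← h2, ← h1, h3, mul_comm]⟩

/-- Let `R` be a standard graded Artinian Gorenstein algebra over an Artinian local ring
`R₀`, with `m` the (irrelevant) ideal generated by the elements of positive degree, and
suppose `m^δ ≠ 0` and `m^{δ+1} = 0`.  Then `0 : mⁱ = m^{δ+1-i}` for `i = 0, 1, …, δ`. -/
theorem ann_irrelevant_pow_eq {R₀ A : Type*} [CommRing R₀] [IsArtinianRing R₀]
    [IsLocalRing R₀] [CommRing A] [Algebra R₀ A] [IsArtinianRing A]
    (𝒜 : ℕ → Submodule R₀ A) [GradedAlgebra 𝒜]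
    (hzerodeg : 𝒜 0 = (1 : Submodule R₀ A))
    (hstd : ∀ n, 𝒜 (n + 1) = 𝒜 1 * 𝒜 n)
    (hGor : Module.Injective A A)
    (m : Ideal A) (hm : m = (HomogeneousIdeal.irrelevant 𝒜).toIdeal)
    (δ : ℕ) (hne : m ^ δ ≠ ⊥) (hzero : m ^ (δ + 1) = ⊥) :
    ∀ i ≤ δ, Submodule.annihilator (m ^ i) = m ^ (δ + 1 - i) := by
  classical
  -- membership in `m` means the degree-0 component vanishes
  have mem_m : ∀ a : A, a ∈ m ↔ (DirectSum.decompose 𝒜 a 0 : A) = 0 := by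
    intro a
    rw [hm]
    exact HomogeneousIdeal.mem_irrelevant_iff 𝒜 a
  -- homogeneous elements of degree `n ≥ i` lie in `m ^ i`
  have hAn_pow : ∀ i n : ℕ, i ≤ n → ∀ x ∈ 𝒜 n, x ∈ m ^ i := by
    intro i
    induction i with
    | zero => intro n _ x _; simp
    | succ i ih =>
      intro n hn x hx
      obtain ⟨k, rfl⟩ : ∃ k, n = k + 1 := ⟨n - 1, by omega⟩
      rw [hstd] at hx
      refine Submodule.mul_induction_on hx (fun a ha b hb => ?_)
        (fun u v hu hv => Ideal.add_mem _ hu hv)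
      have ham : a ∈ m := by
        rw [mem_m]
        exact DirectSum.decompose_of_mem_ne 𝒜 ha one_ne_zero
      have hbp : b ∈ m ^ i := ih k (by omega) b hb
      rw [pow_succ']
      exact Ideal.mul_mem_mul ham hbp
  -- components above degree δ vanish
  have hAtop : ∀ n, δ < n → ∀ x ∈ 𝒜 n, x = 0 := by
    intro n hn x hx
    have := hAn_pow (δ + 1) n hn x hx
    rwa [hzero, Submodule.mem_bot] at this
  -- if `x` kills degree 1 then `x` kills `m`
  have hkill : ∀ x : A, (∀ y ∈ 𝒜 1, x * y = 0) → ∀ z ∈ m, x * z = 0 := by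
    intro x hx1
    have hk : ∀ k, ∀ y ∈ 𝒜 (k + 1), x * y = 0 := by
      intro k y hy
      rw [hstd] at hy
      refine Submodule.mul_induction_on hy (fun a ha b hb => ?_)
        (fun u v hu hv => by rw [mul_add, hu, hv, add_zero])
      rw [← mul_assoc, hx1 a ha, zero_mul]
    intro z hz
    rw [← DirectSum.sum_support_decompose 𝒜 z, Finset.mul_sum]
    refine Finset.sum_eq_zero fun k _ => ?_
    rcases k with _ | k
    · rw [(mem_m z).mp hz, mul_zero]
    · exact hk k _ (SetLike.coe_mem _)
  have : Nontrivial A := by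
    rcases subsingleton_or_nontrivial A with h | h
    · exact absurd (Subsingleton.elim _ _) hne
    · exact h
  -- degree-0 components come from R₀
  have hdec0 : ∀ a : A, ∃ r : R₀, algebraMap R₀ A r = (DirectSum.decompose 𝒜 a 0 : A) := by
    intro a
    obtain ⟨v, hv0, hveq⟩ : ∃ v : A, v ∈ 𝒜 0 ∧ (DirectSum.decompose 𝒜 a 0 : A) = v :=
      ⟨_, SetLike.coe_mem _, rfl⟩
    rw [hzerodeg, Submodule.mem_one] at hv0
    obtain ⟨r, hr⟩ := hv0
    exact ⟨r, by rw [hr, hveq]⟩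
  -- `a` minus its degree-0 component lies in `m`
  have hsub : ∀ a : A, a - (DirectSum.decompose 𝒜 a 0 : A) ∈ m := by
    intro a
    have h0 : (DirectSum.decompose 𝒜 a 0 : A) ∈ 𝒜 0 := SetLike.coe_mem _
    rw [mem_m, DirectSum.decompose_sub]
    simp [DirectSum.decompose_of_mem_same 𝒜 h0]
  have hnilm : ∀ z ∈ m, IsNilpotent z := by
    intro z hz
    refine ⟨δ + 1, ?_⟩
    have := Ideal.pow_mem_pow hz (δ + 1)
    rwa [hzero, Submodule.mem_bot] at this
  -- A is local
  have hlocal : IsLocalRing A := by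
    apply IsLocalRing.of_isUnit_or_isUnit_one_sub_self
    intro a
    obtain ⟨r, hr⟩ := hdec0 a
    have hnil : IsNilpotent (a - (DirectSum.decompose 𝒜 a 0 : A)) := hnilm _ (hsub a)
    rcases IsLocalRing.isUnit_or_isUnit_one_sub_self r with h | h
    · left
      have hu : IsUnit ((algebraMap R₀ A) r) := h.map _
      have heq : a = (a - (DirectSum.decompose 𝒜 a 0 : A)) + (algebraMap R₀ A) r := by
        rw [hr]; ring
      rw [heq]
      exact hnil.isUnit_add_right_of_commute hu (Commute.all _ _)
    · right
      have hu : IsUnit ((algebraMap R₀ A) (1 - r)) := h.map _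
      have heq : 1 - a = (-(a - (DirectSum.decompose 𝒜 a 0 : A))) + (algebraMap R₀ A) (1 - r) := by
        rw [map_sub, map_one, hr]; ring
      rw [heq]
      exact hnil.neg.isUnit_add_right_of_commute hu (Commute.all _ _)
  set M := IsLocalRing.maximalIdeal A with hM
  obtain ⟨c, hc⟩ : IsNilpotent M := by
    have := IsArtinianRing.isNilpotent_jacobson_bot (R := A)
    rwa [IsLocalRing.jacobson_eq_maximalIdeal ⊥ bot_ne_top] at this
  -- any nonzero ideal contains a nonzero element killed by M
  have socle : ∀ T : Ideal A, T ≠ ⊥ →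
      ∃ s : A, s ≠ 0 ∧ s ∈ T ∧ ∀ z ∈ M, z * s = 0 := by
    intro T hT
    have hex : ∃ k, M ^ k * T = ⊥ := ⟨c, by rw [hc]; simp⟩
    have hk0 : Nat.find hex ≠ 0 := by
      intro h
      have hspec := Nat.find_spec hex
      rw [h, pow_zero, Ideal.one_eq_top, Ideal.top_mul] at hspec
      exact hT hspec
    have hne' : M ^ (Nat.find hex - 1) * T ≠ ⊥ := Nat.find_min hex (by omega)
    obtain ⟨s, hsmem, hs0⟩ := Submodule.exists_mem_ne_zero_of_ne_bot hne'
    refine ⟨s, hs0, Ideal.mul_le_right hsmem, fun z hz => ?_⟩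
    have h1 : z * s ∈ M * (M ^ (Nat.find hex - 1) * T) := Ideal.mul_mem_mul hz hsmem
    rw [← mul_assoc, ← pow_succ', show Nat.find hex - 1 + 1 = Nat.find hex by omega,
      Nat.find_spec hex, Submodule.mem_bot] at h1
    exact h1
  -- two nonzero socle elements divide each other
  have hann : ∀ s t : A, s ≠ 0 → t ≠ 0 → (∀ z ∈ M, z * s = 0) → (∀ z ∈ M, z * t = 0) →
      ∃ b, s = b * t := by
    intro s t hs ht hMs hMt
    apply aux_exists_eq_mul_of_ann_le hGor
    intro a hat
    by_cases ha : IsUnit a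
    · exact absurd ((IsUnit.mul_right_eq_zero ha).mp hat) ht
    · exact hMs a (IsLocalRing.mem_maximalIdeal a |>.mpr ha)
  -- m ≤ span (𝒜 1)
  have hm1 : m ≤ Ideal.span (𝒜 1 : Set A) := by
    intro z hz
    rw [← DirectSum.sum_support_decompose 𝒜 z]
    refine Ideal.sum_mem _ fun k _ => ?_
    rcases k with _ | k
    · rw [(mem_m z).mp hz]; exact Ideal.zero_mem _
    · obtain ⟨w, hw, hweq⟩ : ∃ w : A, w ∈ 𝒜 (k + 1) ∧ (DirectSum.decompose 𝒜 z (k + 1) : A) = w :=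
        ⟨_, SetLike.coe_mem _, rfl⟩
      rw [hstd] at hw
      rw [hweq]
      refine Submodule.mul_induction_on hw (fun a ha b hb => ?_)
        (fun u v hu hv => Ideal.add_mem _ hu hv)
      exact Ideal.mul_mem_right b _ (Ideal.subset_span ha)
  -- span (𝒜 1) ^ i ≤ span (𝒜 i)
  have hspan : ∀ i : ℕ, 1 ≤ i → (Ideal.span (𝒜 1 : Set A)) ^ i ≤ Ideal.span ((𝒜 i : Set A)) := by
    intro i hi
    induction i with
    | zero => omega
    | succ i ih =>
      rcases Nat.eq_zero_or_pos i with rfl | hi'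
      · rw [pow_one]
      · rw [pow_succ]
        calc (Ideal.span (𝒜 1 : Set A)) ^ i * Ideal.span (𝒜 1 : Set A)
            ≤ Ideal.span ((𝒜 i : Set A)) * Ideal.span (𝒜 1 : Set A) :=
              Ideal.mul_mono_left (ih hi')
          _ = Ideal.span ((𝒜 i : Set A) * (𝒜 1 : Set A)) := Ideal.span_mul_span' _ _
          _ ≤ Ideal.span ((𝒜 (i + 1) : Set A)) := by
              apply Ideal.span_mono
              rintro _ ⟨a, ha, b, hb, rfl⟩
              exact SetLike.mul_mem_graded ha hb
  -- span (𝒜 δ) is contained in 𝒜 δ (as a set), provided δ ≥ 1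
  have hspan_top : 1 ≤ δ → ∀ x ∈ Ideal.span ((𝒜 δ : Set A)), x ∈ 𝒜 δ := by
    intro hδ x hx
    refine Submodule.span_induction ?_ (Submodule.zero_mem _) (fun u v _ _ hu hv => Submodule.add_mem _ hu hv) ?_ hx
    · intro y hy; exact hy
    · intro a y _ hy
      have h1 : a • y = (DirectSum.decompose 𝒜 a 0 : A) * y + (a - (DirectSum.decompose 𝒜 a 0 : A)) * y := by
        ring_nf
      have h2 : (a - (DirectSum.decompose 𝒜 a 0 : A)) * y = 0 := by
        have hy' : y ∈ m ^ δ := hAn_pow δ δ le_rfl y hy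
        have := Ideal.mul_mem_mul (hsub a) hy'
        rwa [← pow_succ', hzero, Submodule.mem_bot] at this
      rw [h1, h2, add_zero]
      have := SetLike.mul_mem_graded (SetLike.coe_mem (DirectSum.decompose 𝒜 a 0)) hy
      rwa [zero_add] at this
  have hmdelta : 1 ≤ δ → m ^ δ ≤ Ideal.span ((𝒜 δ : Set A)) := by
    intro hδ
    calc m ^ δ ≤ (Ideal.span (𝒜 1 : Set A)) ^ δ := Ideal.pow_right_mono hm1 δ
      _ ≤ Ideal.span ((𝒜 δ : Set A)) := hspan δ hδ
  -- the key pairing lemma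
  have crux : ∀ d, d ≤ δ → ∀ x ∈ 𝒜 (δ - d), (∀ y ∈ 𝒜 d, x * y = 0) → x = 0 := by
    intro d
    induction d with
    | zero =>
      intro _ x _ h0
      have h1 : x * 1 = 0 := h0 1 (SetLike.one_mem_graded 𝒜)
      simpa using h1
    | succ d ih =>
      intro hd x hx hxy
      by_contra hx0
      by_cases hy : ∀ y ∈ 𝒜 1, x * y = 0
      · -- x kills m; produce a socle element in two different degrees
        have hxm : ∀ z ∈ m, x * z = 0 := hkill x hy
        obtain ⟨s, hs0, hsmem, hsM⟩ := socle (Ideal.span {x})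
          (by rw [Ne, Ideal.span_singleton_eq_bot]; exact hx0)
        obtain ⟨b, hbx⟩ := Ideal.mem_span_singleton'.mp hsmem
        have hs_deg : s ∈ 𝒜 (δ - (d + 1)) := by
          have hsb : s = (DirectSum.decompose 𝒜 b 0 : A) * x := by
            have h2 : x * (b - (DirectSum.decompose 𝒜 b 0 : A)) = 0 := hxm _ (hsub b)
            have : s = ((DirectSum.decompose 𝒜 b 0 : A) + (b - (DirectSum.decompose 𝒜 b 0 : A))) * x := by
              rw [← hbx]; ring_nf
            rw [this, add_mul, mul_comm (b - (DirectSum.decompose 𝒜 b 0 : A)) x, h2, add_zero]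
          rw [hsb]
          have := SetLike.mul_mem_graded (SetLike.coe_mem (DirectSum.decompose 𝒜 b 0)) hx
          rwa [zero_add] at this
        obtain ⟨t, ht0, htmem, htM⟩ := socle (m ^ δ) hne
        have ht_deg : t ∈ 𝒜 δ := hspan_top (by omega) t (hmdelta (by omega) htmem)
        have htm : ∀ z ∈ m, t * z = 0 := by
          apply hkill
          intro y hy1
          exact hAtop (δ + 1) (by omega) _ (SetLike.mul_mem_graded ht_deg hy1)
        obtain ⟨b', hbt⟩ := hann s t hs0 ht0 hsM htM
        have hs_deg' : s ∈ 𝒜 δ := by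
          have hsb : s = (DirectSum.decompose 𝒜 b' 0 : A) * t := by
            have h2 : t * (b' - (DirectSum.decompose 𝒜 b' 0 : A)) = 0 := htm _ (hsub b')
            have : s = ((DirectSum.decompose 𝒜 b' 0 : A) + (b' - (DirectSum.decompose 𝒜 b' 0 : A))) * t := by
              rw [hbt]; ring_nf
            rw [this, add_mul, mul_comm (b' - (DirectSum.decompose 𝒜 b' 0 : A)) t, h2, add_zero]
          rw [hsb]
          have := SetLike.mul_mem_graded (SetLike.coe_mem (DirectSum.decompose 𝒜 b' 0)) ht_deg
          rwa [zero_add] at this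
        have hne_deg : δ ≠ δ - (d + 1) := by omega
        have hzero' := DirectSum.decompose_of_mem_ne 𝒜 hs_deg' hne_deg
        have hsame := DirectSum.decompose_of_mem_same 𝒜 hs_deg
        exact hs0 (by rw [← hsame, hzero'])
      · push_neg at hy
        obtain ⟨y, hy1, hxy0⟩ := hy
        have hxy_mem : x * y ∈ 𝒜 (δ - d) := by
          have := SetLike.mul_mem_graded hx hy1
          rwa [show δ - (d + 1) + 1 = δ - d by omega] at this
        refine hxy0 (ih (by omega) _ hxy_mem fun w hw => ?_)
        rw [mul_assoc]
        have hyw : y * w ∈ 𝒜 (d + 1) := by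
          have := SetLike.mul_mem_graded hy1 hw
          rwa [add_comm] at this
        exact hxy _ hyw
  -- the main statement
  intro i hi
  apply le_antisymm
  · intro x hx
    rw [Submodule.mem_annihilator] at hx
    rw [← DirectSum.sum_support_decompose 𝒜 x]
    refine Ideal.sum_mem _ fun n _ => ?_
    by_cases hn : δ + 1 - i ≤ n
    · exact Ideal.pow_le_pow_right hn (hAn_pow n n le_rfl _ (SetLike.coe_mem _))
    · have hz : (DirectSum.decompose 𝒜 x n : A) = 0 := by
        apply crux (δ - n) (by omega)
        · rw [show δ - (δ - n) = n by omega]; exact SetLike.coe_mem _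
        · intro y hy
          have hxy : x * y = 0 := by
            have hym : y ∈ m ^ i := hAn_pow i (δ - n) (by omega) y hy
            have := hx y hym
            simpa [smul_eq_mul] using this
          have hpr := DirectSum.coe_decompose_mul_add_of_right_mem 𝒜 (i := n) (a := x) hy
          rw [hxy] at hpr
          simpa using hpr.symm
      rw [hz]; exact Ideal.zero_mem _
  · intro x hx
    rw [Submodule.mem_annihilator]
    intro y hy
    have hxy : x * y ∈ m ^ (δ + 1 - i) * m ^ i := Ideal.mul_mem_mul hx hy
    rw [← pow_add, show δ + 1 - i + i = δ + 1 by omega, hzero, Submodule.mem_bot] at hxy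
    simpa [smul_eq_mul] using hxy
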